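/- Fix c ∈ ℂ. Let M = [[0, 1, 0], [0, 0, 1], [−u_0 u_1 (u_2 + c), 0, λ]] and let g = g(u_0,u_1,λ) = [[λ/(u_0 + c), −1/(u_0 + c), 0], [0, λ/(u_0(u_1 + c)), −1/(u_0(u_1 + c))], [1, 0, 0]]. Then det(g) ≠ 0 and S(g)·M·g^{-1} = [[0, u_0, 0], [0, 0, u_0], [−(u_0 + c), 0, λ]]; in particular the gauge-transformed S-part depends only on u_0 and λ. -/

import Mathlib

/-!
Setup: `K1` is the field of rational functions over `ℂ` in the commuting
variables `λ` (here `lam`) and `u_ℓ` (`ℓ : ℤ`), realized as the fraction field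
of the multivariate polynomial ring.  `S1` is the shift automorphism `S`
(fixing `ℂ` and `λ`, sending `u_ℓ` to `u_{ℓ+1}`), and `Sz ℓ = S^ℓ`.
-/

set_option maxHeartbeats 1000000
set_option synthInstance.maxHeartbeats 1000000

noncomputable section

open MvPolynomial

abbrev R1 : Type := MvPolynomial (Option ℤ) ℂ
abbrev K1 : Type := FractionRing R1

def lam : K1 := algebraMap R1 K1 (X none)
def u (ℓ : ℤ) : K1 := algebraMap R1 K1 (X (some ℓ))

def shiftR1 : R1 ≃+* R1 :=
  (renameEquiv ℂ (Equiv.optionCongr (Equiv.addRight (1:ℤ)))).toRingEquiv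

/-- The shift automorphism `S` of the field `K1`. -/
def S1 : RingAut K1 := IsFractionRing.ringEquivOfRingEquiv shiftR1

/-- `Sz ℓ = S^ℓ`. -/
def Sz (ℓ : ℤ) : K1 ≃+* K1 := S1 ^ ℓ

lemma S1_alg (r : R1) : S1 (algebraMap R1 K1 r) = algebraMap R1 K1 (shiftR1 r) :=
  IsFractionRing.ringEquivOfRingEquiv_algebraMap shiftR1 r

lemma shiftR1_X_some (ℓ : ℤ) : shiftR1 (X (some ℓ)) = X (some (ℓ+1)) := by
  simp [shiftR1]

lemma S1_u (ℓ : ℤ) : S1 (u ℓ) = u (ℓ+1) := by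
  rw [u, S1_alg, shiftR1_X_some, u]

lemma S1_lam : S1 lam = lam := by
  rw [lam, S1_alg]; congr 1; simp [shiftR1]

lemma algC (c : ℂ) : algebraMap ℂ K1 c = algebraMap R1 K1 (C c) :=
  (IsScalarTower.algebraMap_apply ℂ R1 K1 c)

lemma S1_c (c : ℂ) : S1 (algebraMap ℂ K1 c) = algebraMap ℂ K1 c := by
  rw [algC, S1_alg]; congr 1; simp [shiftR1]

lemma Sz_one : (Sz 1 : K1 ≃+* K1) = S1 := by
  simp [Sz]

lemma inj1 : Function.Injective (algebraMap R1 K1) :=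
  IsFractionRing.injective R1 K1

lemma u_ne (ℓ : ℤ) : u ℓ ≠ 0 := by
  rw [u, ← (algebraMap R1 K1).map_zero]
  exact fun h => MvPolynomial.X_ne_zero _ (inj1 h)

lemma uc_ne (ℓ : ℤ) (c : ℂ) : u ℓ + algebraMap ℂ K1 c ≠ 0 := by
  rw [u, algC]
  intro h
  have h2 : (X (some ℓ) + C c : R1) = 0 := by
    apply inj1
    rw [(algebraMap R1 K1).map_add, h, (algebraMap R1 K1).map_zero]
  have := congrArg (MvPolynomial.coeff (Finsupp.single (some ℓ) 1)) h2
  rw [MvPolynomial.coeff_add, MvPolynomial.coeff_X, MvPolynomial.coeff_C] at this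
  have hne : (0 : (Option ℤ) →₀ ℕ) ≠ Finsupp.single (some ℓ) 1 := by
    intro h0
    exact one_ne_zero (Finsupp.single_eq_zero.mp h0.symm)
  rw [if_neg hne] at this
  simpa using this

lemma S1_u0 : S1 (u 0) = u 1 := S1_u 0
lemma S1_u1 : S1 (u 1) = u 2 := S1_u 1

lemma u0u1c_ne (c : ℂ) : u 0 * (u 1 + algebraMap ℂ K1 c) ≠ 0 :=
  mul_ne_zero (u_ne 0) (uc_ne 1 c)

/-- the gauge transformation `g = g(u_0,u_1,λ)` below is
invertible and transforms the S-part
`M = [[0,1,0],[0,0,1],[−u_0 u_1 (u_2+c),0,λ]]` into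
`S(g)·M·g⁻¹ = [[0,u_0,0],[0,0,u_0],[−(u_0+c),0,λ]]`, which depends only on
`u_0` and `λ`. -/
theorem statement14 (c : ℂ) :
    (!![lam / (u 0 + algebraMap ℂ K1 c), -(1 / (u 0 + algebraMap ℂ K1 c)), 0;
        0, lam / (u 0 * (u 1 + algebraMap ℂ K1 c)),
          -(1 / (u 0 * (u 1 + algebraMap ℂ K1 c)));
        1, 0, 0] : Matrix (Fin 3) (Fin 3) K1).det ≠ 0 ∧
    (!![lam / (u 0 + algebraMap ℂ K1 c), -(1 / (u 0 + algebraMap ℂ K1 c)), 0;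
        0, lam / (u 0 * (u 1 + algebraMap ℂ K1 c)),
          -(1 / (u 0 * (u 1 + algebraMap ℂ K1 c)));
        1, 0, 0] : Matrix (Fin 3) (Fin 3) K1).map ⇑(Sz 1) *
      !![0, 1, 0; 0, 0, 1; -(u 0 * u 1 * (u 2 + algebraMap ℂ K1 c)), 0, lam] *
      (!![lam / (u 0 + algebraMap ℂ K1 c), -(1 / (u 0 + algebraMap ℂ K1 c)), 0;
          0, lam / (u 0 * (u 1 + algebraMap ℂ K1 c)),
            -(1 / (u 0 * (u 1 + algebraMap ℂ K1 c)));
          1, 0, 0] : Matrix (Fin 3) (Fin 3) K1)⁻¹ =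
    !![0, u 0, 0; 0, 0, u 0; -(u 0 + algebraMap ℂ K1 c), 0, lam] := by
  set a : K1 := algebraMap ℂ K1 c with ha
  have hSa : S1 a = a := by rw [ha]; exact S1_c c
  clear_value a
  have h0 : u 0 + a ≠ 0 := ha ▸ uc_ne 0 c
  have h1 : u 1 + a ≠ 0 := ha ▸ uc_ne 1 c
  have h2 : u 2 + a ≠ 0 := ha ▸ uc_ne 2 c
  have hu0 : u 0 ≠ 0 := u_ne 0
  have hu1 : u 1 ≠ 0 := u_ne 1
  set g : Matrix (Fin 3) (Fin 3) K1 :=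
    !![lam / (u 0 + a), -(1 / (u 0 + a)), 0;
       0, lam / (u 0 * (u 1 + a)), -(1 / (u 0 * (u 1 + a)));
       1, 0, 0] with hg
  have hdet : g.det = 1 / ((u 0 + a) * (u 0 * (u 1 + a))) := by
    rw [hg, Matrix.det_fin_three]
    simp [Matrix.cons_val_zero, Matrix.cons_val_one]
    ring
  have hdne : g.det ≠ 0 := by
    rw [hdet]
    exact one_div_ne_zero (mul_ne_zero h0 (mul_ne_zero hu0 h1))
  have e1 : u 1 * u 0 + a * u 0 ≠ 0 := by
    have h : u 1 * u 0 + a * u 0 = (u 1 + a) * u 0 := by ring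
    rw [h]; exact mul_ne_zero h1 hu0
  have e2 : u 2 * u 1 + a * u 1 ≠ 0 := by
    have h : u 2 * u 1 + a * u 1 = (u 2 + a) * u 1 := by ring
    rw [h]; exact mul_ne_zero h2 hu1
  have e3 : a + u 0 ≠ 0 := by rwa [add_comm] at h0
  have e4 : a + u 1 ≠ 0 := by rwa [add_comm] at h1
  have e5 : a + u 2 ≠ 0 := by rwa [add_comm] at h2
  refine ⟨hdne, ?_⟩
  haveI : Invertible g := g.invertibleOfIsUnitDet hdne.isUnit
  rw [Matrix.mul_inv_eq_iff_eq_mul_of_invertible]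
  ext i j
  fin_cases i <;> fin_cases j <;>
    simp [hg, Matrix.mul_apply, Matrix.vecMul, dotProduct, Fin.sum_univ_three,
      Matrix.map_apply, Matrix.vecHead, Matrix.vecTail, Sz_one, S1_u0, S1_u1, S1_lam, hSa,
      map_div₀]
  all_goals field_simp
  all_goals try ring
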